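/- Let T ∈ M_{k₂}(ℝ) be entrywise nonnegative with T_{11} > 0, let k₁ ≥ 1, n = k₁ + k₂, k₂ ≥ 2, and let A = O_{k₁} ⊕ T ∈ M_n(ℝ). Let C = K_{k₁+1} ⊕ I_{k₂−1}, where K_m is the matrix of the conjugation from the paper satisfying K_m^{-1} E_{mm} K_m = (1/m) J_m. Then B = C^{-1} A C is entrywise nonnegative, and if T is entrywise strictly positive then B is entrywise strictly positive. -/

import Mathlib

open Matrix

set_option maxHeartbeats 1000000
/-- Conjugating `A = O_{k₁} ⊕ T` (with `T ≥ 0`, `T₁₁ > 0`) by `C = K_{k₁+1} ⊕ I_{k₂−1}`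
yields a nonnegative matrix `B = C⁻¹ A C`; if moreover `T > 0` then `B > 0`. -/
theorem stmt17 (k₁ k₂ n : ℕ) (hk₁ : 1 ≤ k₁) (hk₂ : 2 ≤ k₂) (hn : n = k₁ + k₂)
    (T : Matrix (Fin k₂) (Fin k₂) ℝ)
    (hT : ∀ i j, 0 ≤ T i j) (hT11 : 0 < T ⟨0, by omega⟩ ⟨0, by omega⟩)
    (A : Matrix (Fin n) (Fin n) ℝ)
    (hA : ∀ i j : Fin n, A i j =
      if h : k₁ ≤ (i : ℕ) ∧ k₁ ≤ (j : ℕ) then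
        T ⟨(i : ℕ) - k₁, by omega⟩ ⟨(j : ℕ) - k₁, by omega⟩
      else 0)
    (C : Matrix (Fin n) (Fin n) ℝ)
    (hC : ∀ i j : Fin n, C i j =
      if (i : ℕ) ≤ k₁ ∧ (j : ℕ) ≤ k₁ then
        (if (i : ℕ) < k₁ then
          (((k₁ : ℝ) + 1) * (if (j : ℕ) = (i : ℕ) + 1 then 1 else 0) - 1) / ((k₁ : ℝ) + 1)
        else 1 / ((k₁ : ℝ) + 1))
      else if k₁ < (i : ℕ) ∧ k₁ < (j : ℕ) then (if i = j then 1 else 0) else 0) :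
    (∀ i j, 0 ≤ (C⁻¹ * A * C) i j) ∧
      ((∀ i j, 0 < T i j) → ∀ i j, 0 < (C⁻¹ * A * C) i j) := by
  have hk1R : (0:ℝ) < (k₁:ℝ) + 1 := by positivity
  have hk1R' : ((k₁:ℝ) + 1) ≠ 0 := ne_of_gt hk1R
  have h1k : ((1:ℝ) + (k₁:ℝ)) ≠ 0 := by positivity
  set D : Matrix (Fin n) (Fin n) ℝ := fun i j =>
    if (i:ℕ) = 0 then
      (if (j:ℕ) = k₁ then 1 else if (j:ℕ) < k₁ then -1 else 0)
    else if (i:ℕ) ≤ k₁ then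
      (if (j:ℕ) + 1 = (i:ℕ) ∨ (j:ℕ) = k₁ then 1 else 0)
    else (if i = j then 1 else 0) with hDdef
  have hDC : D * C = 1 := by
    ext i j
    rw [Matrix.mul_apply]
    by_cases hik : (i:ℕ) ≤ k₁
    · by_cases hi0 : (i:ℕ) = 0
      · -- first row of the K-block
        by_cases hj : (j:ℕ) ≤ k₁
        · have hterm : ∀ l : Fin n, D i l * C l j =
              (if (l:ℕ) ≤ k₁ then 1/((k₁:ℝ)+1) else 0)
                - (if (l:ℕ)+1 = (j:ℕ) then 1 else 0) := by
            intro l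
            rw [hC]
            simp only [hDdef]
            split_ifs <;>
              first
                | (exfalso; omega)
                | ring1
                | (field_simp [hk1R', h1k]; ring1)
                | (field_simp [hk1R', h1k])
          rw [Finset.sum_congr rfl (fun l _ => hterm l), Finset.sum_sub_distrib,
            Fin.sum_univ_eq_sum_range (fun x => if x ≤ k₁ then 1/((k₁:ℝ)+1) else 0) n,
            Fin.sum_univ_eq_sum_range (fun x => if x + 1 = (j:ℕ) then (1:ℝ) else 0) n]
          have h1 : ∑ x ∈ Finset.range n, (if x ≤ k₁ then 1/((k₁:ℝ)+1) else 0) = 1 := by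
            have he : ∀ x ∈ Finset.range n, (if x ≤ k₁ then 1/((k₁:ℝ)+1) else 0)
                = if x ∈ Finset.range (k₁+1) then 1/((k₁:ℝ)+1) else 0 := by
              intro x _; simp [Finset.mem_range, Nat.lt_succ_iff]
            rw [Finset.sum_congr rfl he, Finset.sum_ite_mem,
              Finset.inter_eq_right.mpr (Finset.range_subset_range.mpr (by omega)),
              Finset.sum_const, Finset.card_range, nsmul_eq_mul]
            push_cast
            field_simp
          rw [h1]
          by_cases hj0 : (j:ℕ) = 0
          · rw [Finset.sum_eq_zero (fun x _ => by rw [if_neg (by omega)])]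
            have hij : i = j := Fin.ext (by omega)
            rw [hij, Matrix.one_apply_eq]
            ring
          · have he : ∀ x ∈ Finset.range n, (if x + 1 = (j:ℕ) then (1:ℝ) else 0)
                = if x = (j:ℕ) - 1 then (1:ℝ) else 0 := by
              intro x _
              by_cases h : x + 1 = (j:ℕ)
              · rw [if_pos h, if_pos (by omega)]
              · rw [if_neg h, if_neg (by omega)]
            rw [Finset.sum_congr rfl he,
              Finset.sum_ite_eq' (Finset.range n) ((j:ℕ)-1) (fun _ => (1:ℝ)),
              if_pos (Finset.mem_range.mpr (by omega))]
            have hij : i ≠ j := by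
              intro h; exact hj0 (by rw [← h, hi0])
            rw [Matrix.one_apply_ne hij]
            ring
        · -- j > k₁ : everything vanishes
          rw [Finset.sum_eq_zero, Matrix.one_apply_ne (by intro h; rw [← h] at hj; omega)]
          intro l _
          rw [hC]
          simp only [hDdef]
          split_ifs <;> first | (exfalso; omega) | ring
      · -- rows 1..k₁ of the K-block
        set a : Fin n := ⟨(i:ℕ)-1, by omega⟩ with ha
        set b : Fin n := ⟨k₁, by omega⟩ with hb
        have hav : (a:ℕ) = (i:ℕ) - 1 := rfl
        have hbv : (b:ℕ) = k₁ := rfl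
        have hab : a ≠ b := by
          simp only [ne_eq, Fin.ext_iff, hav, hbv]; omega
        have hsum : ∑ l, D i l * C l j = D i a * C a j + D i b * C b j := by
          have h1 : ∑ l ∈ ({a, b} : Finset (Fin n)), D i l * C l j
              = ∑ l, D i l * C l j := by
            refine Finset.sum_subset (Finset.subset_univ _) ?_
            intro x _ hx
            simp only [Finset.mem_insert, Finset.mem_singleton] at hx
            push_neg at hx
            obtain ⟨hx1, hx2⟩ := hx
            have hx1' : (x:ℕ) ≠ (i:ℕ) - 1 := fun h => hx1 (Fin.ext (by omega))
            have hx2' : (x:ℕ) ≠ k₁ := fun h => hx2 (Fin.ext (by omega))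
            have hD0 : D i x = 0 := by
              simp only [hDdef]
              rw [if_neg hi0, if_pos hik, if_neg (by rintro (h | h) <;> omega)]
            rw [hD0, zero_mul]
          rw [← h1, Finset.sum_pair hab]
        rw [hsum]
        have hDa : D i a = 1 := by
          simp only [hDdef]
          rw [if_neg hi0, if_pos hik, if_pos (Or.inl (by omega))]
        have hDb : D i b = 1 := by
          simp only [hDdef]
          rw [if_neg hi0, if_pos hik]
          simp [hbv]
        rw [hDa, hDb, one_mul, one_mul, hC a j, hC b j, Matrix.one_apply]
        simp only [Fin.ext_iff, hav, hbv]
        split_ifs <;>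
          first
            | (exfalso; omega)
            | ring1
            | (field_simp [hk1R', h1k]; ring1)
            | (field_simp [hk1R', h1k])
    · -- identity block rows
      rw [Finset.sum_eq_single i (fun l _ hl => ?_) (fun h => absurd (Finset.mem_univ i) h)]
      · have hDi : D i i = 1 := by
          simp only [hDdef]
          rw [if_neg (by omega : ¬(i:ℕ) = 0), if_neg hik]
          simp
        rw [hDi, one_mul, hC, Matrix.one_apply]
        simp only [Fin.ext_iff]
        split_ifs <;> first | rfl | (exfalso; omega)
      · have hD0 : D i l = 0 := by
          simp only [hDdef]
          rw [if_neg (by omega : ¬(i:ℕ) = 0), if_neg hik, if_neg (fun h => hl h.symm)]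
        rw [hD0, zero_mul]
  have hCinv : C⁻¹ = D := Matrix.inv_eq_left_inv hDC
  have hDA : ∀ i j : Fin n, (D * A) i j =
      if h : k₁ ≤ (j:ℕ) then
        T ⟨(i:ℕ) - k₁, by have := i.isLt; omega⟩ ⟨(j:ℕ) - k₁, by have := j.isLt; omega⟩
      else 0 := by
    intro i j
    rw [Matrix.mul_apply]
    by_cases hik : (i:ℕ) ≤ k₁
    · set b : Fin n := ⟨k₁, by omega⟩ with hb
      have hbv : (b:ℕ) = k₁ := rfl
      rw [Finset.sum_eq_single b (fun l _ hl => ?_) (fun h => absurd (Finset.mem_univ b) h)]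
      · have hD1 : D i b = 1 := by
          simp only [hDdef]
          by_cases hi0 : (i:ℕ) = 0
          · simp [hi0, hbv]
          · simp [hi0, hik, hbv]
        rw [hD1, one_mul, hA]
        by_cases hj : k₁ ≤ (j:ℕ)
        · rw [dif_pos (⟨by omega, hj⟩ : k₁ ≤ (b:ℕ) ∧ k₁ ≤ (j:ℕ)), dif_pos hj]
          congr 2 <;> first | rfl | omega | exact Fin.mk_eq_mk.mpr (by omega)
        · rw [dif_neg (fun h => hj h.2), dif_neg hj]
      · by_cases hlk : k₁ ≤ (l:ℕ)
        · have hlb : (l:ℕ) ≠ k₁ := fun h => hl (Fin.ext (by omega))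
          have hD0 : D i l = 0 := by
            simp only [hDdef]
            by_cases hi0 : (i:ℕ) = 0
            · rw [if_pos hi0, if_neg (by omega), if_neg (by omega)]
            · rw [if_neg hi0, if_pos hik, if_neg (by rintro (h | h) <;> omega)]
          rw [hD0, zero_mul]
        · have hA0 : A l j = 0 := by rw [hA, dif_neg (fun h => hlk h.1)]
          rw [hA0, mul_zero]
    · rw [Finset.sum_eq_single i (fun l _ hl => ?_) (fun h => absurd (Finset.mem_univ i) h)]
      · have hD1 : D i i = 1 := by
          simp only [hDdef]
          rw [if_neg (by omega : ¬(i:ℕ) = 0), if_neg hik]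
          simp
        rw [hD1, one_mul, hA]
        by_cases hj : k₁ ≤ (j:ℕ)
        · rw [dif_pos (⟨by omega, hj⟩ : k₁ ≤ (i:ℕ) ∧ k₁ ≤ (j:ℕ)), dif_pos hj]
        · rw [dif_neg (fun h => hj h.2), dif_neg hj]
      · have hD0 : D i l = 0 := by
          simp only [hDdef]
          rw [if_neg (by omega : ¬(i:ℕ) = 0), if_neg hik, if_neg (fun h => hl h.symm)]
        rw [hD0, zero_mul]
  have hB : ∀ i j : Fin n, (D * A * C) i j =
      if (j:ℕ) ≤ k₁ then
        T ⟨(i:ℕ) - k₁, by have := i.isLt; omega⟩ ⟨0, by omega⟩ * (1/((k₁:ℝ)+1))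
      else T ⟨(i:ℕ) - k₁, by have := i.isLt; omega⟩
        ⟨(j:ℕ) - k₁, by have := j.isLt; omega⟩ := by
    intro i j
    rw [Matrix.mul_apply]
    by_cases hj : (j:ℕ) ≤ k₁
    · set b : Fin n := ⟨k₁, by omega⟩ with hb
      have hbv : (b:ℕ) = k₁ := rfl
      rw [Finset.sum_eq_single b (fun m _ hm => ?_) (fun h => absurd (Finset.mem_univ b) h)]
      · rw [hDA, hC, dif_pos (by omega : k₁ ≤ (b:ℕ)),
          if_pos (⟨le_of_eq hbv, hj⟩ : (b:ℕ) ≤ k₁ ∧ (j:ℕ) ≤ k₁),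
          if_neg (by omega : ¬(b:ℕ) < k₁), if_pos hj]
        congr 2 <;> first | rfl | omega | exact Fin.mk_eq_mk.mpr (by omega)
      · by_cases hmk : k₁ ≤ (m:ℕ)
        · have hm' : k₁ < (m:ℕ) := by
            rcases lt_or_eq_of_le hmk with h | h
            · exact h
            · exact absurd (Fin.ext h.symm : m = b) hm
          rw [hC, if_neg (by omega), if_neg (by omega), mul_zero]
        · rw [hDA, dif_neg hmk, zero_mul]
    · rw [Finset.sum_eq_single j (fun m _ hm => ?_) (fun h => absurd (Finset.mem_univ j) h)]
      · rw [hDA, hC, dif_pos (by omega : k₁ ≤ (j:ℕ)), if_neg (by omega),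
          if_pos (⟨by omega, by omega⟩ : k₁ < (j:ℕ) ∧ k₁ < (j:ℕ)), if_pos rfl,
          if_neg hj, mul_one]
      · by_cases hmk : k₁ < (m:ℕ)
        · rw [hC, if_neg (by omega), if_pos (⟨hmk, by omega⟩ : k₁ < (m:ℕ) ∧ k₁ < (j:ℕ)),
            if_neg hm, mul_zero]
        · by_cases hmk' : k₁ ≤ (m:ℕ)
          · rw [hC, if_neg (by omega), if_neg (by omega), mul_zero]
          · rw [hDA, dif_neg hmk', zero_mul]
  rw [hCinv]
  constructor
  · intro i j
    rw [hB]
    split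
    · exact mul_nonneg (hT _ _) (by positivity)
    · exact hT _ _
  · intro hT' i j
    rw [hB]
    split
    · exact mul_pos (hT' _ _) (by positivity)
    · exact hT' _ _
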